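/- (Limit of the regularized coefficients as λ → ∞.) Let R̃ ∈ ℝ^{d×(k+1)} be any matrix and for each λ > 0 let c̃^λ be the regularized extrapolation coefficients computed from R̃. Then c̃^λ converges to the uniform averaging vector (1/(k+1))·𝟙 as λ → ∞; i.e., the extrapolated point Σ_{i=0}^{k} c̃^λ_i x̃_i converges to the average (1/(k+1)) Σ_{i=0}^{k} x̃_i for any fixed vectors x̃_0,…,x̃_k ∈ ℝ^d. -/

import Mathlib

open Matrix Filter

/-- `c` is the vector of regularized extrapolation coefficients for the matrix `M`
and regularization parameter `lam`: it minimizes `‖M c‖² + lam ‖c‖²` over `{c : 𝟙ᵀc = 1}`. -/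
def IsRNACoeff {d k : ℕ} (M : Matrix (Fin d) (Fin (k+1)) ℝ) (lam : ℝ)
    (c : EuclideanSpace ℝ (Fin (k+1))) : Prop :=
  (∑ i, c i) = 1 ∧ ∀ c' : EuclideanSpace ℝ (Fin (k+1)), (∑ i, c' i) = 1 →
    ‖Matrix.toEuclideanLin M c‖ ^ 2 + lam * ‖c‖ ^ 2 ≤
      ‖Matrix.toEuclideanLin M c'‖ ^ 2 + lam * ‖c'‖ ^ 2

/-- As `λ → ∞`, the regularized extrapolation coefficients converge to the uniform
averaging vector `(1/(k+1))·𝟙`, and the extrapolated point converges to the plain average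
of the iterates. -/
theorem rna_coeffs_tendsto_average (d k : ℕ) (Rt : Matrix (Fin d) (Fin (k+1)) ℝ)
    (c : ℝ → EuclideanSpace ℝ (Fin (k+1)))
    (hc : ∀ lam : ℝ, 0 < lam → IsRNACoeff Rt lam (c lam)) :
    Tendsto c atTop (nhds (WithLp.toLp 2 (fun _ => 1 / ((k : ℝ) + 1)) : EuclideanSpace ℝ (Fin (k+1)))) ∧
    ∀ xt : Fin (k+1) → EuclideanSpace ℝ (Fin d),
      Tendsto (fun lam => ∑ i : Fin (k+1), c lam i • xt i) atTop
        (nhds ((1 / ((k : ℝ) + 1)) • ∑ i : Fin (k+1), xt i)) := by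
  set α : ℝ := 1 / ((k : ℝ) + 1) with hα
  set u : EuclideanSpace ℝ (Fin (k+1)) := WithLp.toLp 2 (fun _ => α) with hudef
  have hk : ((k : ℝ) + 1) ≠ 0 := by positivity
  have hsum_u : (∑ i : Fin (k+1), u i) = 1 := by
    simp only [hudef, PiLp.toLp_apply, Finset.sum_const, Finset.card_univ, Fintype.card_fin, nsmul_eq_mul, hα]
    push_cast
    field_simp
  have hinner : ∀ v : EuclideanSpace ℝ (Fin (k+1)), (∑ i, v i) = 1 →
      (inner ℝ v u : ℝ) = α := by
    intro v hv
    simp only [PiLp.inner_apply, RCLike.inner_apply, starRingEnd_apply, star_trivial, hudef, PiLp.toLp_apply]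
    rw [← Finset.mul_sum, hv, mul_one]
  have hnormu : ‖u‖ ^ 2 = α := by
    rw [← real_inner_self_eq_norm_sq, hinner u hsum_u]
  have hpyth : ∀ v : EuclideanSpace ℝ (Fin (k+1)), (∑ i, v i) = 1 →
      ‖v - u‖ ^ 2 = ‖v‖ ^ 2 - ‖u‖ ^ 2 := by
    intro v hv
    rw [norm_sub_sq_real, hinner v hv, hnormu]
    ring
  set A : ℝ := ‖Matrix.toEuclideanLin Rt u‖ ^ 2 with hA
  have hbound : ∀ lam : ℝ, 0 < lam → ‖c lam - u‖ ^ 2 ≤ A / lam := by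
    intro lam hl
    obtain ⟨h1, h2⟩ := hc lam hl
    have h := h2 u hsum_u
    rw [hpyth (c lam) h1, le_div_iff₀ hl]
    nlinarith [sq_nonneg ‖Matrix.toEuclideanLin Rt (c lam)‖]
  have htend0 : Tendsto (fun lam => ‖c lam - u‖) atTop (nhds 0) := by
    have hg : Tendsto (fun lam : ℝ => Real.sqrt (A / lam)) atTop (nhds 0) := by
      have h1 : Tendsto (fun lam : ℝ => A / lam) atTop (nhds 0) :=
        tendsto_const_nhds.div_atTop tendsto_id
      have := (Real.continuous_sqrt.tendsto 0).comp h1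
      simpa [Function.comp_def] using this
    apply squeeze_zero' (Eventually.of_forall fun t => norm_nonneg _) ?_ hg
    filter_upwards [eventually_gt_atTop 0] with lam hl
    calc ‖c lam - u‖ = Real.sqrt (‖c lam - u‖ ^ 2) := (Real.sqrt_sq (norm_nonneg _)).symm
      _ ≤ Real.sqrt (A / lam) := Real.sqrt_le_sqrt (hbound lam hl)
  have hmain : Tendsto c atTop (nhds u) := by
    rw [tendsto_iff_norm_sub_tendsto_zero]
    exact htend0
  refine ⟨hmain, fun xt => ?_⟩
  have hlim : Tendsto (fun lam => ∑ i : Fin (k+1), c lam i • xt i) atTop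
      (nhds (∑ i : Fin (k+1), u i • xt i)) := by
    apply tendsto_finset_sum
    intro i _
    have hci : Tendsto (fun lam => c lam i) atTop (nhds (u i)) := by
      have := ((EuclideanSpace.proj (𝕜 := ℝ) i).continuous.tendsto u).comp hmain
      simpa [Function.comp_def] using this
    exact hci.smul_const (xt i)
  have heq : (∑ i : Fin (k+1), u i • xt i) = α • ∑ i : Fin (k+1), xt i := by
    rw [Finset.smul_sum]
  rwa [heq] at hlim
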